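/- arXiv:2109.05514 — 5 statements merged into one kernel-verified Lean document; each statement's English description precedes it below -/
import Mathlib

section
/- For every odd prime power q, the matrix S_q satisfies S_q S_qᵀ = q·I_{q+1} over the integers. -/
open Matrix Finset

/-- The Pless matrix `S_q`, with rows and columns indexed by `GF(q) ∪ {∞}`
(`none` playing the role of `∞`), built from the quadratic character of `GF(q)`. -/
def Smat (F : Type) [Field F] [Fintype F] [DecidableEq F] :
    Matrix (Option F) (Option F) ℤ := fun i j =>
  match i, j with
  | none, none => 0
  | none, some _ => 1
  | some _, none => quadraticChar F (-1)
  | some a, some b => quadraticChar F (a - b)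

lemma key_sum {F : Type} [Field F] [Fintype F] [DecidableEq F] (h2 : ringChar F ≠ 2)
    {d : F} (hd : d ≠ 0) :
    ∑ x : F, (quadraticChar F x : ℤ) * quadraticChar F (x + d) = -1 := by
  rw [← Finset.add_sum_erase _ _ (Finset.mem_univ (0 : F))]
  rw [show (quadraticChar F (0:F) : ℤ) * quadraticChar F (0 + d) = 0 by
    simp [quadraticChar_zero], zero_add]
  have hstep : ∀ x ∈ Finset.univ.erase (0 : F),
      (quadraticChar F x : ℤ) * quadraticChar F (x + d)
        = quadraticChar F (1 + d * x⁻¹) := by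
    intro x hx
    have hx0 : x ≠ 0 := Finset.ne_of_mem_erase hx
    have hxd : x * (x + d) = x ^ 2 * (1 + d * x⁻¹) := by
      field_simp
    rw [← _root_.map_mul, hxd, _root_.map_mul, quadraticChar_sq_one' hx0, one_mul]
  rw [Finset.sum_congr rfl hstep]
  have hbij : ∑ x ∈ Finset.univ.erase (0 : F), (quadraticChar F (1 + d * x⁻¹) : ℤ)
      = ∑ y ∈ Finset.univ.erase (1 : F), (quadraticChar F y : ℤ) := by
    refine Finset.sum_nbij' (fun x => 1 + d * x⁻¹) (fun y => d * (y - 1)⁻¹) ?_ ?_ ?_ ?_ ?_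
    · intro x hx
      have hx0 : x ≠ 0 := Finset.ne_of_mem_erase hx
      refine Finset.mem_erase.mpr ⟨?_, Finset.mem_univ _⟩
      intro h
      have : d * x⁻¹ = 0 := by linear_combination h
      rcases mul_eq_zero.mp this with h' | h'
      · exact hd h'
      · exact hx0 (inv_eq_zero.mp h')
    · intro y hy
      have hy1 : y ≠ 1 := Finset.ne_of_mem_erase hy
      refine Finset.mem_erase.mpr ⟨?_, Finset.mem_univ _⟩
      intro h
      rcases mul_eq_zero.mp h with h' | h'
      · exact hd h'
      · exact hy1 (by have := inv_eq_zero.mp h'; linear_combination this)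
    · intro x hx
      have hx0 : x ≠ 0 := Finset.ne_of_mem_erase hx
      field_simp
      simp [hd]
    · intro y hy
      have hy1 : y ≠ 1 := Finset.ne_of_mem_erase hy
      have : y - 1 ≠ 0 := sub_ne_zero.mpr hy1
      field_simp
      ring
    · intro x hx; rfl
  rw [hbij, Finset.sum_erase_eq_sub (Finset.mem_univ (1 : F)),
    quadraticChar_sum_zero h2]
  simp

lemma cross_sum {F : Type} [Field F] [Fintype F] [DecidableEq F] (h2 : ringChar F ≠ 2)
    {a b : F} (hab : a ≠ b) :
    ∑ c : F, (quadraticChar F (a - c) : ℤ) * quadraticChar F (b - c) = -1 := by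
  have hd : a - b ≠ 0 := sub_ne_zero.mpr hab
  calc ∑ c : F, (quadraticChar F (a - c) : ℤ) * quadraticChar F (b - c)
      = ∑ x : F, (quadraticChar F (x + (a - b)) : ℤ) * quadraticChar F x := by
        refine Fintype.sum_equiv (Equiv.subLeft b) _ _ fun x => ?_
        simp only [Equiv.subLeft_apply]
        ring_nf
    _ = ∑ x : F, (quadraticChar F x : ℤ) * quadraticChar F (x + (a - b)) := by
        simp_rw [mul_comm]
    _ = -1 := key_sum h2 hd

lemma quad_diag_sum {F : Type} [Field F] [Fintype F] [DecidableEq F] (a : F) :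
    ∑ c : F, (quadraticChar F (a - c) : ℤ) * quadraticChar F (a - c)
      = (Fintype.card F : ℤ) - 1 := by
  calc ∑ c : F, (quadraticChar F (a - c) : ℤ) * quadraticChar F (a - c)
      = ∑ x : F, (quadraticChar F x : ℤ) * quadraticChar F x := by
        refine Fintype.sum_equiv (Equiv.subLeft a) _ _ fun x => ?_
        simp
    _ = ∑ x : F, if x = 0 then 0 else 1 := by
        refine Finset.sum_congr rfl fun x _ => ?_
        by_cases hx : x = 0
        · simp [hx, quadraticChar_zero]
        · have := quadraticChar_sq_one (F := F) hx
          simpa [hx, sq] using congrArg (Int.cast : ℤ → ℤ) this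
    _ = (Fintype.card F : ℤ) - 1 := by
        rw [← Finset.add_sum_erase _ _ (Finset.mem_univ (0 : F)), if_pos rfl, zero_add,
          Finset.sum_congr rfl (fun x hx => if_neg (Finset.ne_of_mem_erase hx)),
          Finset.sum_const, Finset.card_erase_of_mem (Finset.mem_univ _), Finset.card_univ,
          nsmul_eq_mul, mul_one, Nat.cast_sub Fintype.card_pos, Nat.cast_one]

/-- For every odd prime power `q` (realized as the cardinality of a finite field `F`),
the matrix `S_q` satisfies `S_q * S_qᵀ = q • I` over the integers. -/
theorem stmt_0 (q : ℕ) (hq : Odd q) (F : Type) [Field F] [Fintype F] [DecidableEq F]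
    (hF : Fintype.card F = q) :
    Smat F * (Smat F)ᵀ = (q : ℤ) • (1 : Matrix (Option F) (Option F) ℤ) := by
  have h2 : ringChar F ≠ 2 := by
    intro h
    have he := FiniteField.even_card_of_char_two h
    rw [hF] at he
    rw [Nat.odd_iff] at hq
    omega
  have hneg : ((quadraticChar F (-1 : F) : ℤ)) * (quadraticChar F (-1 : F) : ℤ) = 1 := by
    have := quadraticChar_sq_one (F := F) (neg_ne_zero.mpr one_ne_zero)
    simpa [sq] using congrArg (Int.cast : ℤ → ℤ) this
  ext i j
  rw [Matrix.mul_apply, Matrix.smul_apply, Matrix.one_apply]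
  simp only [Matrix.transpose_apply]
  match i, j with
  | none, none =>
    simp only [if_pos rfl, smul_eq_mul, mul_one]
    rw [Fintype.sum_option]
    simp [Smat, hF]
  | none, some b =>
    simp only [reduceIte, smul_eq_mul, mul_zero]
    rw [Fintype.sum_option]
    simp only [Smat, zero_mul, one_mul, zero_add]
    calc ∑ a : F, (quadraticChar F (b - a) : ℤ)
        = ∑ x : F, (quadraticChar F x : ℤ) := by
          refine Fintype.sum_equiv (Equiv.subLeft b) _ _ fun x => ?_
          simp
      _ = 0 := by exact_mod_cast congrArg (Int.cast : ℤ → ℤ) (quadraticChar_sum_zero h2)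
  | some a, none =>
    simp only [reduceIte, smul_eq_mul, mul_zero]
    rw [Fintype.sum_option]
    simp only [Smat, mul_zero, mul_one, zero_add]
    calc ∑ c : F, (quadraticChar F (a - c) : ℤ)
        = ∑ x : F, (quadraticChar F x : ℤ) := by
          refine Fintype.sum_equiv (Equiv.subLeft a) _ _ fun x => ?_
          simp
      _ = 0 := by exact_mod_cast congrArg (Int.cast : ℤ → ℤ) (quadraticChar_sum_zero h2)
  | some a, some b =>
    rw [Fintype.sum_option]
    simp only [Smat]
    by_cases hab : a = b
    · subst hab
      rw [if_pos rfl, quad_diag_sum, hneg, hF]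
      simp
    · rw [if_neg (by simpa using hab), cross_sum h2 hab, hneg]
      simp
end

section
/- For every odd prime power q with q ≡ 2 (mod 3), the Pless symmetry code C(q) is a self-dual ternary code: C(q) equals its dual code with respect to the standard bilinear form on GF(3)^{2q+2}; in particular C(q) has dimension q+1. -/
open Matrix Finset

/-- The row of the generator matrix `(I | S_q)` of the Pless symmetry code,
reduced modulo 3, indexed by `i : Option F`. -/
def genRowC (F : Type) [Field F] [Fintype F] [DecidableEq F] (i : Option F) :
    (Option F ⊕ Option F) → ZMod 3 := fun j =>
  match j with
  | Sum.inl k => if i = k then 1 else 0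
  | Sum.inr k => ((Smat F i k : ℤ) : ZMod 3)

/-- The Pless symmetry code `C(q)`: the ternary code of length `2q+2` spanned by
the rows of `(I | S_q)` reduced modulo 3. -/
def Ccode (F : Type) [Field F] [Fintype F] [DecidableEq F] :
    Submodule (ZMod 3) ((Option F ⊕ Option F) → ZMod 3) :=
  Submodule.span (ZMod 3) (Set.range (genRowC F))

lemma char_sum_aux (F : Type) [Field F] [Fintype F] [DecidableEq F] (hF2 : ringChar F ≠ 2) {d : F} (hd : d ≠ 0) :
    ∑ x : F, quadraticChar F x * quadraticChar F (x + d) = -1 := by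
  have h0 : quadraticChar F (0:F) = 0 := quadraticChar_zero
  rw [← Finset.sum_erase_add _ _ (Finset.mem_univ (0:F)), h0, zero_mul, add_zero]
  have step : ∑ x ∈ Finset.univ.erase (0:F), quadraticChar F x * quadraticChar F (x + d)
      = ∑ y ∈ Finset.univ.erase (1:F), quadraticChar F y := by
    refine Finset.sum_bij' (fun x _ => 1 + d * x⁻¹) (fun y _ => d * (y - 1)⁻¹)
      ?_ ?_ ?_ ?_ ?_
    · intro x hx
      have hx0 : x ≠ 0 := Finset.ne_of_mem_erase hx
      refine Finset.mem_erase.mpr ⟨?_, Finset.mem_univ _⟩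
      intro h
      have : d * x⁻¹ = 0 := by linear_combination h
      simp [hd, hx0] at this
    · intro y hy
      have hy1 : y ≠ 1 := Finset.ne_of_mem_erase hy
      refine Finset.mem_erase.mpr ⟨?_, Finset.mem_univ _⟩
      have : y - 1 ≠ 0 := sub_ne_zero.mpr hy1
      simp [hd, this]
    · intro x hx
      have hx0 : x ≠ 0 := Finset.ne_of_mem_erase hx
      field_simp
      rw [add_sub_cancel_left, div_self hd]
    · intro y hy
      have hy1 : y - 1 ≠ 0 := sub_ne_zero.mpr (Finset.ne_of_mem_erase hy)
      field_simp
      ring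
    · intro x hx
      have hx0 : x ≠ 0 := Finset.ne_of_mem_erase hx
      have hxd : x + d = x * (1 + d * x⁻¹) := by field_simp
      rw [hxd, _root_.map_mul, ← mul_assoc, ← pow_two, quadraticChar_sq_one hx0, one_mul]
  rw [step]
  have := Finset.sum_erase_add Finset.univ (fun y => quadraticChar F y) (Finset.mem_univ (1:F))
  rw [quadraticChar_sum_zero hF2] at this
  have h1 : quadraticChar F (1:F) = 1 := MulChar.map_one _
  beta_reduce at this
  rw [h1] at this
  linarith [this]

lemma sum_chi_shift (F : Type) [Field F] [Fintype F] [DecidableEq F] (a : F) : ∑ b : F, quadraticChar F (a - b) = ∑ x : F, quadraticChar F x := by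
  exact Fintype.sum_equiv (Equiv.subLeft a) _ _ (fun x => rfl)

lemma sum_smat (F : Type) [Field F] [Fintype F] [DecidableEq F] (hF2 : ringChar F ≠ 2) (i i' : Option F) :
    ∑ k : Option F, Smat F i k * Smat F i' k
      = if i = i' then (Fintype.card F : ℤ) else 0 := by
  rw [Fintype.sum_option]
  match i, i' with
  | none, none =>
      simp [Smat, Finset.card_univ]
  | none, some a =>
      rw [if_neg (by simp)]
      show (0:ℤ) * _ + ∑ b : F, 1 * quadraticChar F (a - b) = 0
      simp only [zero_mul, zero_add, one_mul]
      rw [sum_chi_shift, quadraticChar_sum_zero hF2]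
  | some a, none =>
      rw [if_neg (by simp)]
      show (quadraticChar F (-1) : ℤ) * 0 + ∑ b : F, quadraticChar F (a - b) * 1 = 0
      simp only [mul_zero, zero_add, mul_one]
      rw [sum_chi_shift, quadraticChar_sum_zero hF2]
  | some a, some c =>
      show (quadraticChar F (-1) : ℤ) * quadraticChar F (-1)
          + ∑ b : F, quadraticChar F (a - b) * quadraticChar F (c - b) = _
      have hneg : (quadraticChar F (-1) : ℤ) * quadraticChar F (-1) = 1 := by
        rw [← pow_two]
        exact quadraticChar_sq_one (neg_ne_zero.mpr one_ne_zero)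
      rw [hneg]
      rcases eq_or_ne a c with rfl | hne
      · rw [if_pos rfl]
        have hterm : ∑ b : F, quadraticChar F (a - b) * quadraticChar F (a - b)
            = (Fintype.card F : ℤ) - 1 := by
          have h1 : ∑ b : F, quadraticChar F (a - b) * quadraticChar F (a - b)
              = ∑ x : F, quadraticChar F x * quadraticChar F x :=
            Fintype.sum_equiv (Equiv.subLeft a) _ _ (fun x => rfl)
          rw [h1, ← Finset.sum_erase_add _ _ (Finset.mem_univ (0:F))]
          have h2 : ∑ x ∈ Finset.univ.erase (0:F),
              quadraticChar F x * quadraticChar F x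
              = ∑ x ∈ Finset.univ.erase (0:F), (1:ℤ) := by
            refine Finset.sum_congr rfl (fun x hx => ?_)
            rw [← pow_two]
            exact quadraticChar_sq_one (Finset.ne_of_mem_erase hx)
          rw [h2, Finset.sum_const, quadraticChar_zero, mul_zero, add_zero,
            Finset.card_erase_of_mem (Finset.mem_univ _), Finset.card_univ]
          have : 1 ≤ Fintype.card F := Fintype.card_pos
          rw [nsmul_eq_mul, mul_one, Nat.cast_sub this, Nat.cast_one]
        rw [hterm]; ring
      · rw [if_neg (by simpa using hne)]
        have h1 : ∑ b : F, quadraticChar F (a - b) * quadraticChar F (c - b)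
            = ∑ x : F, quadraticChar F x * quadraticChar F (x + (c - a)) := by
          refine Fintype.sum_equiv (Equiv.subLeft a) _ _ (fun x => ?_)
          simp only [Equiv.subLeft_apply]
          congr 2
          ring
        rw [h1, char_sum_aux F hF2 (sub_ne_zero.mpr (Ne.symm hne))]
        ring

def dotB (ι : Type) [Fintype ι] : LinearMap.BilinForm (ZMod 3) (ι → ZMod 3) :=
  LinearMap.mk₂ (ZMod 3) (fun v w => ∑ j, v j * w j)
    (fun v v' w => by simp [add_mul, Finset.sum_add_distrib])
    (fun c v w => by simp [Finset.mul_sum, mul_assoc])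
    (fun v w w' => by simp [mul_add, Finset.sum_add_distrib])
    (fun c v w => by simp [Finset.mul_sum, mul_left_comm])

lemma dotB_apply (ι : Type) [Fintype ι] (v w : ι → ZMod 3) :
    dotB ι v w = ∑ j, v j * w j := rfl

lemma dotB_symm (ι : Type) [Fintype ι] (v w : ι → ZMod 3) :
    dotB ι v w = dotB ι w v := by
  simp [dotB_apply, mul_comm]

lemma dotB_refl (ι : Type) [Fintype ι] : (dotB ι).IsRefl := by
  intro v w h
  rw [← dotB_symm]; exact h

lemma dotB_nondeg (ι : Type) [Fintype ι] [DecidableEq ι] : (dotB ι).Nondegenerate := by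
  refine (LinearMap.IsRefl.nondegenerate_iff_separatingLeft (dotB_refl ι)).mpr ?_
  intro v h
  funext j
  have := h (Pi.single j 1)
  rw [dotB_apply] at this
  simpa [Pi.single_apply, mul_ite, Finset.sum_ite_eq'] using this

lemma rows_orth (F : Type) [Field F] [Fintype F] [DecidableEq F]
    (hF2 : ringChar F ≠ 2) (h3 : Fintype.card F % 3 = 2) (i i' : Option F) :
    dotB _ (genRowC F i) (genRowC F i') = 0 := by
  rw [dotB_apply, Fintype.sum_sum_type]
  have hinl : ∑ k : Option F, genRowC F i (Sum.inl k) * genRowC F i' (Sum.inl k)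
      = if i = i' then 1 else 0 := by
    simp only [genRowC]
    simp [ite_and, Finset.sum_ite_eq', eq_comm]
  have hinr : ∑ k : Option F, genRowC F i (Sum.inr k) * genRowC F i' (Sum.inr k)
      = ((if i = i' then (Fintype.card F : ℤ) else 0 : ℤ) : ZMod 3) := by
    rw [← sum_smat F hF2 i i']
    push_cast
    rfl
  rw [hinl, hinr]
  rcases eq_or_ne i i' with rfl | hne
  · simp only [if_pos rfl, eq_self_iff_true, if_true]
    have hc : ((Fintype.card F : ℤ) : ZMod 3) = 2 := by
      have h' : ((Fintype.card F : ℕ) : ZMod 3) = 2 := by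
        rw [← ZMod.natCast_mod, h3]; rfl
      exact_mod_cast h'
    rw [hc]
    decide
  · simp [hne]

lemma rows_indep (F : Type) [Field F] [Fintype F] [DecidableEq F] :
    LinearIndependent (ZMod 3) (genRowC F) := by
  have : LinearIndependent (ZMod 3)
      (fun i : Option F => (LinearMap.funLeft (ZMod 3) (ZMod 3) Sum.inl) (genRowC F i)) := by
    have heq : (fun i : Option F =>
        (LinearMap.funLeft (ZMod 3) (ZMod 3) Sum.inl) (genRowC F i))
        = fun i => (Pi.single i 1 : Option F → ZMod 3) := by
      funext i k
      simp [LinearMap.funLeft, genRowC, Pi.single_apply, eq_comm]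
    rw [heq]
    have hb := (Pi.basisFun (ZMod 3) (Option F)).linearIndependent
    have : ⇑(Pi.basisFun (ZMod 3) (Option F)) = fun i => (Pi.single i 1 : Option F → ZMod 3) := by
      funext i; exact Pi.basisFun_apply _ _ i
    rwa [this] at hb
  exact this.of_comp _


/-- For every odd prime power `q ≡ 2 (mod 3)`, the Pless symmetry code `C(q)` is self-dual:
it equals its dual code with respect to the standard bilinear form on `GF(3)^{2q+2}`;
in particular it has dimension `q+1`. -/
theorem stmt_1 (q : ℕ) (hq : Odd q) (h3 : q % 3 = 2)
    (F : Type) [Field F] [Fintype F] [DecidableEq F] (hF : Fintype.card F = q) :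
    (∀ v : (Option F ⊕ Option F) → ZMod 3,
        v ∈ Ccode F ↔ ∀ c ∈ Ccode F, ∑ j, v j * c j = 0) ∧
    Module.finrank (ZMod 3) (Ccode F) = q + 1 := by
  have hF2 : ringChar F ≠ 2 := by
    intro h
    have h2 := FiniteField.even_card_of_char_two h
    rw [hF] at h2
    have := Nat.odd_iff.mp hq
    omega
  have h3' : Fintype.card F % 3 = 2 := by rw [hF]; exact h3
  set ι := (Option F ⊕ Option F) with hι
  have hle : Ccode F ≤ (dotB ι).orthogonal (Ccode F) := by
    rw [Ccode, Submodule.span_le]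
    rintro _ ⟨i, rfl⟩
    simp only [SetLike.mem_coe]
    rw [LinearMap.BilinForm.mem_orthogonal_iff]
    intro n hn
    have hker : Ccode F ≤ LinearMap.ker ((dotB ι).flip (genRowC F i)) := by
      rw [Ccode, Submodule.span_le]
      rintro _ ⟨i', rfl⟩
      simp only [SetLike.mem_coe, LinearMap.mem_ker, LinearMap.flip_apply]
      exact rows_orth F hF2 h3' i' i
    have hk := hker hn
    simp only [LinearMap.mem_ker, LinearMap.flip_apply] at hk
    exact hk
  have hdim : Module.finrank (ZMod 3) (Ccode F) = q + 1 := by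
    rw [Ccode, finrank_span_eq_card (rows_indep F)]
    simp [hF]
  have hcard : Fintype.card ι = 2 * q + 2 := by
    simp only [hι, Fintype.card_sum, Fintype.card_option, hF]
    ring
  have horth : Module.finrank (ZMod 3) ((dotB ι).orthogonal (Ccode F)) = q + 1 := by
    rw [LinearMap.BilinForm.finrank_orthogonal (dotB_nondeg ι), hdim,
      Module.finrank_fintype_fun_eq_card, hcard]
    omega
  have heq : Ccode F = (dotB ι).orthogonal (Ccode F) :=
    Submodule.eq_of_le_of_finrank_eq hle (by rw [hdim, horth])
  refine ⟨?_, hdim⟩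
  intro v
  constructor
  · intro hv c hc
    have h0 : (dotB ι) c v = 0 := by
      rw [heq] at hv
      exact (LinearMap.BilinForm.mem_orthogonal_iff.mp hv) c hc
    rw [dotB_apply] at h0
    rw [← h0]
    exact Finset.sum_congr rfl (fun j _ => mul_comm _ _)
  · intro h
    rw [heq, LinearMap.BilinForm.mem_orthogonal_iff]
    intro c hc
    have hc' := h c hc
    show dotB ι c v = 0
    rw [dotB_apply, ← hc']
    exact Finset.sum_congr rfl (fun j _ => mul_comm _ _)
end

section
/- Let q be an odd prime power with q ≡ 3 (mod 4) and q ≡ 2 (mod 3). Then the block matrix H₃(q) = [[I_{q+1} + S_q, I_{q+1} + S_q], [I_{q+1} − S_q, −I_{q+1} + S_q]] is a Hadamard matrix of order 2q+2, and every row of H₃(q), reduced modulo 3, is a codeword of the Pless symmetry code C(q). -/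
open Matrix Finset

/-- The Hadamard matrix `H₃(q) = [[I + S_q, I + S_q], [I − S_q, −I + S_q]]`. -/
def H3mat (F : Type) [Field F] [Fintype F] [DecidableEq F] :
    Matrix (Option F ⊕ Option F) (Option F ⊕ Option F) ℤ :=
  Matrix.fromBlocks (1 + Smat F) (1 + Smat F) (1 - Smat F) (-1 + Smat F)

section helpers
variable {F : Type} [Field F] [Fintype F] [DecidableEq F]

lemma char_shift_sum (hF2 : ringChar F ≠ 2) {d : F} (hd : d ≠ 0) :
    ∑ x : F, quadraticChar F x * quadraticChar F (x + d) = -1 := by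
  have h1 : ∀ x : F, x ≠ 0 → quadraticChar F x * quadraticChar F (x + d)
      = quadraticChar F (1 + d * x⁻¹) := by
    intro x hx
    have : x + d = x * (1 + d * x⁻¹) := by field_simp
    rw [this, _root_.map_mul, ← mul_assoc, ← _root_.map_mul, ← sq,
      quadraticChar_sq_one' hx, one_mul]
  rw [← Finset.sum_erase (univ) (a := (0:F)) (by simp)]
  rw [Finset.sum_congr rfl (fun x hx => h1 x (Finset.ne_of_mem_erase hx))]
  have hbij : ∑ x ∈ univ.erase (0:F), quadraticChar F (1 + d * x⁻¹)
      = ∑ y ∈ univ.erase (1:F), quadraticChar F y := by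
    apply Finset.sum_nbij' (i := fun x => 1 + d * x⁻¹) (j := fun y => d * (y - 1)⁻¹)
    · intro x hx
      simp only [mem_erase, mem_univ, and_true] at *
      intro h
      apply hx
      have : d * x⁻¹ = 0 := by linear_combination h
      rcases mul_eq_zero.1 this with h | h
      · exact absurd h hd
      · exact inv_eq_zero.1 h
    · intro y hy
      simp only [mem_erase, mem_univ, and_true] at *
      intro h
      rcases mul_eq_zero.1 h with h | h
      · exact absurd h hd
      · exact hy (by rwa [inv_eq_zero, sub_eq_zero] at h)
    · intro x hx
      simp only [mem_erase, mem_univ, and_true] at hx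
      field_simp
      simp [hd]
    · intro y hy
      simp only [mem_erase, mem_univ, and_true] at hy
      have hsub : y - 1 ≠ 0 := sub_ne_zero.2 hy
      field_simp
      ring
    · intro x hx; rfl
  rw [hbij, Finset.sum_erase_eq_sub (by simp), quadraticChar_sum_zero hF2, _root_.map_one]; ring

lemma chi_neg_one (hF2 : ringChar F ≠ 2) (h4 : Fintype.card F % 4 = 3) :
    quadraticChar F (-1) = -1 := by
  rw [quadraticChar_neg_one hF2, ZMod.χ₄_nat_mod_four, h4]; decide

lemma sum_chi_sub (hF2 : ringChar F ≠ 2) (a : F) :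
    ∑ b : F, quadraticChar F (a - b) = 0 := by
  rw [← quadraticChar_sum_zero hF2]
  exact Fintype.sum_bijective (Equiv.subLeft a) (Equiv.subLeft a).bijective _ _ fun b => rfl

lemma sum_chi_mul (hF2 : ringChar F ≠ 2) {a c : F} (hac : a ≠ c) :
    ∑ b : F, quadraticChar F (a - b) * quadraticChar F (c - b) = -1 := by
  have hd : c - a ≠ 0 := sub_ne_zero.2 (Ne.symm hac)
  rw [← char_shift_sum hF2 hd]
  refine Fintype.sum_bijective (Equiv.subLeft a) (Equiv.subLeft a).bijective _ _ fun b => ?_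
  have : c - b = (a - b) + (c - a) := by ring
  rw [this]; rfl

lemma Smat_transpose (hF2 : ringChar F ≠ 2) (h4 : Fintype.card F % 4 = 3) :
    (Smat F)ᵀ = - Smat F := by
  have hneg := chi_neg_one hF2 h4
  ext i j
  match i, j with
  | none, none => simp [Smat]
  | none, some a => simp [Smat, transpose_apply, hneg]
  | some a, none => simp [Smat, transpose_apply, hneg]
  | some a, some b =>
    simp only [transpose_apply, Smat, neg_apply]
    have h1 : (b : F) - a = (-1) * (a - b) := by ring
    rw [h1, _root_.map_mul, hneg]; ring

lemma Smat_mul_transpose (hF2 : ringChar F ≠ 2) (h4 : Fintype.card F % 4 = 3) :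
    Smat F * (Smat F)ᵀ = (Fintype.card F : ℤ) • 1 := by
  have hneg := chi_neg_one hF2 h4
  ext i j
  rw [mul_apply]
  match i, j with
  | none, none =>
    simp [Smat, transpose_apply, Matrix.smul_apply, one_apply, Fintype.sum_option]
  | none, some c =>
    simp only [Smat, transpose_apply, Fintype.sum_option, Matrix.smul_apply, one_apply,
      mul_zero, one_mul, zero_mul, zero_add, reduceCtorEq, if_false, smul_zero]
    exact sum_chi_sub hF2 c
  | some a, none =>
    simp only [Smat, transpose_apply, Fintype.sum_option, Matrix.smul_apply, one_apply,
      zero_mul, mul_one, mul_zero, zero_add, reduceCtorEq, if_false, smul_zero]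
    exact sum_chi_sub hF2 a
  | some a, some c =>
    simp only [Smat, transpose_apply, Fintype.sum_option, Matrix.smul_apply, one_apply]
    have hneg2 : quadraticChar F (-1) * quadraticChar F (-1) = 1 := by rw [hneg]; ring
    rw [hneg2]
    by_cases hac : a = c
    · subst hac
      simp only [Option.some.injEq, if_pos rfl, smul_eq_mul, mul_one]
      have h2 : ∀ b : F, quadraticChar F (a - b) * quadraticChar F (a - b)
          = if a = b then 0 else 1 := by
        intro b
        by_cases h : a = b
        · simp [h]
        · rw [← sq, quadraticChar_sq_one (sub_ne_zero.2 h), if_neg h]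
      rw [Finset.sum_congr rfl fun b _ => h2 b]
      rw [← Finset.add_sum_erase univ _ (mem_univ a), if_pos rfl, zero_add]
      rw [Finset.sum_congr rfl (fun b hb => if_neg (Ne.symm (Finset.ne_of_mem_erase hb)))]
      rw [Finset.sum_const, Finset.card_erase_of_mem (mem_univ a), Finset.card_univ]
      have hpos : 1 ≤ Fintype.card F := Fintype.card_pos
      push_cast [Nat.cast_sub hpos]
      ring_nf
      omega
    · simp only [Option.some.injEq, if_neg hac, smul_zero]
      rw [sum_chi_mul hF2 hac]
      ring

lemma Smat_diag (i : Option F) : Smat F i i = 0 := by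
  cases i <;> simp [Smat]

lemma Smat_off (hF2 : ringChar F ≠ 2) (h4 : Fintype.card F % 4 = 3)
    {i j : Option F} (h : i ≠ j) : Smat F i j = 1 ∨ Smat F i j = -1 := by
  match i, j with
  | none, none => exact absurd rfl h
  | none, some a => left; rfl
  | some a, none => right; exact chi_neg_one hF2 h4
  | some a, some b =>
    have hab : a ≠ b := fun e => h (by rw [e])
    exact quadraticChar_dichotomy (sub_ne_zero.2 hab)

end helpers

/-- For an odd prime power `q ≡ 3 (mod 4)` with `q ≡ 2 (mod 3)`, the matrix `H₃(q)`
is a Hadamard matrix of order `2q+2`, and each of its rows, reduced modulo 3,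
is a codeword of the Pless symmetry code `C(q)`. -/
theorem stmt_3 (q : ℕ) (h4 : q % 4 = 3) (h3 : q % 3 = 2)
    (F : Type) [Field F] [Fintype F] [DecidableEq F] (hF : Fintype.card F = q) :
    (∀ i j, H3mat F i j = 1 ∨ H3mat F i j = -1) ∧
    H3mat F * (H3mat F)ᵀ =
      ((2 * q + 2 : ℕ) : ℤ) • (1 : Matrix (Option F ⊕ Option F) (Option F ⊕ Option F) ℤ) ∧
    (∀ i, (fun j => ((H3mat F i j : ℤ) : ZMod 3)) ∈ Ccode F) := by
  have hF2 : ringChar F ≠ 2 := by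
    intro h
    have := FiniteField.even_card_iff_char_two.mp h
    omega
  have h4' : Fintype.card F % 4 = 3 := by rw [hF]; exact h4
  have hT := Smat_transpose hF2 h4'
  have hSSt := Smat_mul_transpose hF2 h4'
  rw [hF] at hSSt
  have hSS : Smat F * Smat F = -((q : ℤ) • 1) := by
    have : Smat F * (Smat F)ᵀ = -(Smat F * Smat F) := by rw [hT]; simp [Matrix.mul_neg]
    rw [this, neg_eq_iff_eq_neg] at hSSt
    exact hSSt
  refine ⟨?_, ?_, ?_⟩
  · -- entries ±1
    rintro (i | i) (j | j) <;>
      simp only [H3mat, fromBlocks_apply₁₁, fromBlocks_apply₁₂, fromBlocks_apply₂₁,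
        fromBlocks_apply₂₂, Matrix.add_apply, Matrix.sub_apply, Matrix.neg_apply, one_apply] <;>
      by_cases h : i = j
    · subst h; simp [Smat_diag]
    · rcases Smat_off hF2 h4' h with hs | hs <;> simp [h, hs]
    · subst h; simp [Smat_diag]
    · rcases Smat_off hF2 h4' h with hs | hs <;> simp [h, hs]
    · subst h; simp [Smat_diag]
    · rcases Smat_off hF2 h4' h with hs | hs <;> simp [h, hs]
    · subst h; simp [Smat_diag]
    · rcases Smat_off hF2 h4' h with hs | hs <;> simp [h, hs]
  · -- Hadamard identity
    rw [H3mat, fromBlocks_transpose, fromBlocks_multiply, ← fromBlocks_one,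
      Matrix.fromBlocks_smul]
    simp only [transpose_add, transpose_sub, transpose_neg, transpose_one, hT, smul_zero]
    rw [fromBlocks_inj]
    refine ⟨?_, ?_, ?_, ?_⟩
    · have e1 : (1 + Smat F) * (1 + -Smat F) = 1 - Smat F * Smat F := by noncomm_ring
      rw [show (1 + Smat F) * (1 + -Smat F) + (1 + Smat F) * (1 + -Smat F)
          = (1 - Smat F * Smat F) + (1 - Smat F * Smat F) by rw [e1], hSS]
      push_cast
      module
    · noncomm_ring
    · noncomm_ring
    · rw [show (1 - Smat F) * (1 - -Smat F) + (-1 + Smat F) * (-1 + -Smat F)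
          = (1 - Smat F * Smat F) + (1 - Smat F * Smat F) by noncomm_ring, hSS]
      push_cast
      module
  · -- code membership
    have hq3 : ((q : ℤ) : ZMod 3) = -1 := by
      have h' : ((q : ℕ) : ZMod 3) = ((q % 3 : ℕ) : ZMod 3) := (ZMod.natCast_mod q 3).symm
      rw [h3] at h'
      push_cast at h' ⊢
      rw [h']
      decide
    have hcast : ∀ i j : Option F,
        (∑ k, ((Smat F i k : ℤ) : ZMod 3) * ((Smat F k j : ℤ) : ZMod 3))
          = if i = j then 1 else 0 := by
      intro i j
      have h := congrFun (congrFun hSS i) j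
      simp only [Matrix.mul_apply, Matrix.neg_apply, Matrix.smul_apply, Matrix.one_apply,
        smul_eq_mul] at h
      have h2 := congrArg (fun z : ℤ => (z : ZMod 3)) h
      simp only [Int.cast_sum, Int.cast_mul, Int.cast_neg] at h2
      rw [h2]
      by_cases hij : i = j
      · rw [if_pos hij, if_pos hij]
        push_cast [hq3]
        decide
      · rw [if_neg hij, if_neg hij]
        push_cast
        ring
    have hmem : ∀ (v : Option F → ZMod 3),
        (∑ k, v k • genRowC F k) ∈ Ccode F :=
      fun v => Submodule.sum_mem _ fun k _ =>
        Submodule.smul_mem _ _ (Submodule.subset_span ⟨k, rfl⟩)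
    have hgen : ∀ i : Option F, genRowC F i ∈ Ccode F :=
      fun i => Submodule.subset_span ⟨i, rfl⟩
    have hsum1 : ∀ (i k : Option F),
        (∑ m, ((Smat F i m : ℤ) : ZMod 3) • genRowC F m) (Sum.inl k)
          = ((Smat F i k : ℤ) : ZMod 3) := by
      intro i k
      rw [Finset.sum_apply]
      simp only [Pi.smul_apply, genRowC, smul_eq_mul, mul_ite, mul_one, mul_zero]
      simp [Finset.sum_ite_eq']
    have hsum2 : ∀ (i k : Option F),
        (∑ m, ((Smat F i m : ℤ) : ZMod 3) • genRowC F m) (Sum.inr k)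
          = if i = k then 1 else 0 := by
      intro i k
      rw [Finset.sum_apply]
      simp only [Pi.smul_apply, genRowC, smul_eq_mul]
      exact hcast i k
    rintro (i | i)
    · have heq : (fun j => ((H3mat F (Sum.inl i) j : ℤ) : ZMod 3))
          = genRowC F i + ∑ k, ((Smat F i k : ℤ) : ZMod 3) • genRowC F k := by
        funext j
        rcases j with k | k
        · simp only [Pi.add_apply, hsum1, H3mat, fromBlocks_apply₁₁, Matrix.add_apply, one_apply,
            genRowC]
          push_cast [apply_ite (fun z : ℤ => (z : ZMod 3))]
          ring
        · simp only [Pi.add_apply, hsum2, H3mat, fromBlocks_apply₁₂, Matrix.add_apply, one_apply,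
            genRowC]
          push_cast [apply_ite (fun z : ℤ => (z : ZMod 3))]
          ring
      rw [heq]
      exact Submodule.add_mem _ (hgen i) (hmem _)
    · have heq : (fun j => ((H3mat F (Sum.inr i) j : ℤ) : ZMod 3))
          = genRowC F i - ∑ k, ((Smat F i k : ℤ) : ZMod 3) • genRowC F k := by
        funext j
        rcases j with k | k
        · simp only [Pi.sub_apply, hsum1, H3mat, fromBlocks_apply₂₁, Matrix.sub_apply, one_apply,
            genRowC]
          push_cast [apply_ite (fun z : ℤ => (z : ZMod 3))]
          ring
        · simp only [Pi.sub_apply, hsum2, H3mat, fromBlocks_apply₂₂, Matrix.add_apply, Matrix.neg_apply,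
            one_apply, genRowC]
          push_cast [apply_ite (fun z : ℤ => (z : ZMod 3))]
          ring
      rw [heq]
      exact Submodule.sub_mem _ (hgen i) (hmem _)
end

section
/- Let F be a family of 36 pairwise distinct 15-element subsets of a 36-element point set X such that any two distinct members of F intersect in exactly 6 points. Then F is the block set of a symmetric 2-(36,15,6) design: every point of X lies in exactly 15 members of F, and every pair of distinct points of X lies in exactly 6 members of F. -/
open Finset

lemma var_zero {α : Type*} (s : Finset α) (f : α → ℤ) (c : ℤ)
    (h1 : ∑ a ∈ s, f a = c * s.card)
    (h2 : ∑ a ∈ s, (f a)^2 = c^2 * s.card) :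
    ∀ a ∈ s, f a = c := by
  have key : ∑ a ∈ s, (f a - c)^2 = 0 := by
    have e : ∀ a ∈ s, (f a - c)^2 = (f a)^2 - 2*c*(f a) + c^2 := by intros; ring
    rw [Finset.sum_congr rfl e, Finset.sum_add_distrib, Finset.sum_sub_distrib, h2,
      ← Finset.mul_sum, h1, Finset.sum_const]
    ring
  intro a ha
  have h0 := (Finset.sum_eq_zero_iff_of_nonneg (fun a _ => sq_nonneg (f a - c))).mp key a ha
  have := sq_eq_zero_iff.mp h0
  linarith

lemma sum_deg {X : Type} [Fintype X] [DecidableEq X] (G : Finset (Finset X)) :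
    ∑ y : X, (G.filter (fun B => y ∈ B)).card = ∑ B ∈ G, B.card := by
  simp only [card_filter]
  rw [Finset.sum_comm]
  refine Finset.sum_congr rfl fun B _ => ?_
  rw [Finset.sum_ite_mem, Finset.univ_inter, Finset.card_eq_sum_ones]

lemma sum_deg_sq {X : Type} [Fintype X] [DecidableEq X] (G : Finset (Finset X)) :
    ∑ y : X, ((G.filter (fun B => y ∈ B)).card)^2 = ∑ B ∈ G, ∑ C ∈ G, (B ∩ C).card := by
  simp only [card_filter, sq, Finset.sum_mul_sum]
  rw [Finset.sum_comm]
  refine Finset.sum_congr rfl fun B _ => ?_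
  rw [Finset.sum_comm]
  refine Finset.sum_congr rfl fun C _ => ?_
  have e : ∀ y : X, (if y ∈ B then (1:ℕ) else 0) * (if y ∈ C then 1 else 0)
      = if y ∈ B ∩ C then 1 else 0 := by
    intro y; by_cases hb : y ∈ B <;> by_cases hc : y ∈ C <;> simp [hb, hc]
  rw [Finset.sum_congr rfl fun y _ => e y, Finset.sum_ite_mem, Finset.univ_inter,
    Finset.card_eq_sum_ones]

/-- A family of 36 pairwise distinct 15-element subsets of a 36-element point set, any
two distinct members of which meet in exactly 6 points, is the block set of a symmetric
2-(36,15,6) design: every point lies in exactly 15 members, and every pair of distinct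
points lies in exactly 6 members. -/
theorem stmt_11 (X : Type) [Fintype X] [DecidableEq X] (hX : Fintype.card X = 36)
    (F : Finset (Finset X)) (hcard : F.card = 36)
    (hsize : ∀ B ∈ F, B.card = 15)
    (hint : ∀ B ∈ F, ∀ C ∈ F, B ≠ C → (B ∩ C).card = 6) :
    (∀ x : X, (F.filter (fun B => x ∈ B)).card = 15) ∧
    (∀ x y : X, x ≠ y → (F.filter (fun B => x ∈ B ∧ y ∈ B)).card = 6) := by
  have key : ∀ G ⊆ F, ∀ B ∈ G, ∑ C ∈ G, (B ∩ C).card = 15 + 6 * (G.card - 1) := by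
    intro G hG B hB
    rw [← Finset.add_sum_erase G _ hB, Finset.inter_self, hsize B (hG hB)]
    congr 1
    rw [Finset.sum_congr rfl (fun C hC => hint B (hG hB) C (hG (Finset.mem_of_mem_erase hC))
      (Ne.symm (Finset.ne_of_mem_erase hC))), Finset.sum_const,
      Finset.card_erase_of_mem hB, smul_eq_mul, mul_comm]
  -- part 1
  have hsum1 : ∑ y : X, (F.filter (fun B => y ∈ B)).card = 540 := by
    rw [sum_deg, Finset.sum_congr rfl hsize, Finset.sum_const, hcard]; rfl
  have hsum2 : ∑ y : X, ((F.filter (fun B => y ∈ B)).card)^2 = 8100 := by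
    rw [sum_deg_sq, Finset.sum_congr rfl (fun B hB => key F le_rfl B hB), Finset.sum_const,
      hcard]; rfl
  have part1 : ∀ x : X, (F.filter (fun B => x ∈ B)).card = 15 := by
    have hv := var_zero Finset.univ (fun y => ((F.filter (fun B => y ∈ B)).card : ℤ)) 15
      (by rw [Finset.card_univ, hX]; norm_num; exact_mod_cast hsum1)
      (by rw [Finset.card_univ, hX]; norm_num; exact_mod_cast hsum2)
    intro x
    have h := hv x (Finset.mem_univ x)
    exact_mod_cast h
  refine ⟨part1, ?_⟩
  intro x y hxy
  set G := F.filter (fun B => x ∈ B) with hGdef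
  have hG : G ⊆ F := Finset.filter_subset _ _
  have hGcard : G.card = 15 := part1 x
  have hfe : F.filter (fun B => x ∈ B ∧ y ∈ B) = G.filter (fun B => y ∈ B) := by
    rw [hGdef, Finset.filter_filter]
  have hsum1' : ∑ z : X, (G.filter (fun B => z ∈ B)).card = 225 := by
    rw [sum_deg, Finset.sum_congr rfl (fun B hB => hsize B (hG hB)), Finset.sum_const, hGcard]; rfl
  have hsum2' : ∑ z : X, ((G.filter (fun B => z ∈ B)).card)^2 = 1485 := by
    rw [sum_deg_sq, Finset.sum_congr rfl (fun B hB => key G hG B hB), Finset.sum_const, hGcard]; rfl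
  have hgx : (G.filter (fun B => x ∈ B)).card = 15 := by
    rw [Finset.filter_true_of_mem (fun B hB => (Finset.mem_filter.mp hB).2), hGcard]
  have hcards : (Finset.univ.erase x).card = 35 := by
    rw [Finset.card_erase_of_mem (Finset.mem_univ x), Finset.card_univ, hX]
  have htot1 : ∑ z : X, ((G.filter (fun B => z ∈ B)).card : ℤ) = 225 := by
    exact_mod_cast hsum1'
  have htot2 : ∑ z : X, (((G.filter (fun B => z ∈ B)).card : ℤ))^2 = 1485 := by
    exact_mod_cast hsum2'
  have hv := var_zero (Finset.univ.erase x)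
      (fun z => ((G.filter (fun B => z ∈ B)).card : ℤ)) 6 ?_ ?_
  · have hmem : y ∈ Finset.univ.erase x := Finset.mem_erase.mpr ⟨hxy.symm, Finset.mem_univ y⟩
    have h := hv y hmem
    rw [hfe]
    exact_mod_cast h
  · have hstep := Finset.sum_erase_add Finset.univ
      (fun z => ((G.filter (fun B => z ∈ B)).card : ℤ)) (Finset.mem_univ x)
    simp only [hgx] at hstep
    rw [hcards]
    push_cast at hstep ⊢
    linarith [htot1]
  · have hstep := Finset.sum_erase_add Finset.univ
      (fun z => (((G.filter (fun B => z ∈ B)).card : ℤ))^2) (Finset.mem_univ x)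
    simp only [hgx] at hstep
    rw [hcards]
    push_cast at hstep ⊢
    linarith [htot2]
end

section
/- Let q ≡ 3 (mod 4) be a prime power. The (q+1)×(q+1) integer matrix P, with rows and columns indexed by GF(q) ∪ {∞}, defined by P_{∞,b} = 1 for all b, P_{a,∞} = 1 for all a ∈ GF(q), P_{a,a} = −1 for a ∈ GF(q), and P_{a,b} = χ(b−a) for distinct a, b ∈ GF(q), is a Hadamard matrix of order q+1 (the Paley–Hadamard matrix of type I). -/
open Matrix Finset

/-- The Paley–Hadamard matrix of type I for `GF(q)`, `q ≡ 3 (mod 4)`, with rows and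
columns indexed by `GF(q) ∪ {∞}` (`none` playing the role of `∞`): the all-one row and
column border the matrix `S_q − I` on the core `GF(q) × GF(q)`. -/
def Pmat (F : Type) [Field F] [Fintype F] [DecidableEq F] :
    Matrix (Option F) (Option F) ℤ := fun i j =>
  match i, j with
  | none, _ => 1
  | some _, none => 1
  | some a, some b => if a = b then -1 else quadraticChar F (b - a)

section aux

variable {F : Type} [Field F] [Fintype F] [DecidableEq F]

/-- Sum of χ over a shift is zero. -/
lemma paley_shift_sum (hF2 : ringChar F ≠ 2) (b : F) :
    ∑ a : F, (quadraticChar F (a - b) : ℤ) = 0 := by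
  have : ∑ a : F, (quadraticChar F (a - b) : ℤ) = ∑ a : F, (quadraticChar F a : ℤ) :=
    Fintype.sum_equiv (Equiv.subRight b) _ _ (fun a => rfl)
  rw [this]
  have h := quadraticChar_sum_zero hF2
  exact_mod_cast congrArg (Int.cast : ℤ → ℤ) (by exact_mod_cast h)

/-- The key correlation lemma: for `d ≠ 0`,
`∑ x, χ(x) χ(x + d) = -1`. -/
lemma paley_corr (hF2 : ringChar F ≠ 2) {d : F} (hd : d ≠ 0) :
    ∑ x : F, (quadraticChar F x : ℤ) * quadraticChar F (x + d) = -1 := by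
  have h0 : ∑ x : F, (quadraticChar F x : ℤ) * quadraticChar F (x + d)
      = ∑ x ∈ Finset.univ.erase (0 : F),
          (quadraticChar F x : ℤ) * quadraticChar F (x + d) := by
    rw [Finset.sum_erase]
    simp
  rw [h0]
  have h1 : ∀ x ∈ Finset.univ.erase (0 : F),
      (quadraticChar F x : ℤ) * quadraticChar F (x + d)
        = (quadraticChar F (1 + d * x⁻¹) : ℤ) := by
    intro x hx
    have hx0 : x ≠ 0 := (Finset.mem_erase.mp hx).1
    have hxx : x + d = x * (1 + d * x⁻¹) := by field_simp
    rw [hxx, _root_.map_mul, ← mul_assoc]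
    push_cast
    have : (quadraticChar F x : ℤ) * (quadraticChar F x : ℤ) = 1 := by
      have := quadraticChar_sq_one (F := F) hx0
      have : (quadraticChar F x) * (quadraticChar F x) = 1 := by
        rw [← sq]; exact this
      exact_mod_cast this
    rw [this, one_mul]
  rw [Finset.sum_congr rfl h1]
  have h2 : ∑ x ∈ Finset.univ.erase (0 : F), (quadraticChar F (1 + d * x⁻¹) : ℤ)
      = ∑ y ∈ Finset.univ.erase (1 : F), (quadraticChar F y : ℤ) := by
    apply Finset.sum_bij (fun x _ => 1 + d * x⁻¹)
    · intro x hx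
      have hx0 : x ≠ 0 := (Finset.mem_erase.mp hx).1
      simp only [Finset.mem_erase, Finset.mem_univ, and_true]
      intro h
      have : d * x⁻¹ = 0 := by linear_combination h
      rcases mul_eq_zero.mp this with h' | h'
      · exact hd h'
      · exact hx0 (inv_eq_zero.mp h')
    · intro x₁ h₁ x₂ h₂ he
      have h10 : x₁ ≠ 0 := (Finset.mem_erase.mp h₁).1
      have h20 : x₂ ≠ 0 := (Finset.mem_erase.mp h₂).1
      have : d * x₁⁻¹ = d * x₂⁻¹ := by linear_combination he
      have : x₁⁻¹ = x₂⁻¹ := mul_left_cancel₀ hd this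
      exact inv_injective this
    · intro y hy
      have hy1 : y ≠ 1 := (Finset.mem_erase.mp hy).1
      have hy1' : y - 1 ≠ 0 := sub_ne_zero.mpr hy1
      refine ⟨d * (y - 1)⁻¹, Finset.mem_erase.mpr ⟨?_, Finset.mem_univ _⟩, ?_⟩
      · exact mul_ne_zero hd (inv_ne_zero hy1')
      · field_simp
        ring
    · intro x hx; rfl
  rw [h2]
  have h3 : (quadraticChar F (1 : F) : ℤ)
      + ∑ y ∈ Finset.univ.erase (1 : F), (quadraticChar F y : ℤ)
      = ∑ y : F, (quadraticChar F y : ℤ) :=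
    Finset.add_sum_erase _ _ (Finset.mem_univ _)
  have h4 : ∑ y : F, (quadraticChar F y : ℤ) = 0 := by
    simpa using paley_shift_sum (F := F) hF2 0
  have h5 : (quadraticChar F (1 : F) : ℤ) = 1 := by
    exact_mod_cast map_one (quadraticChar F)
  linarith [h3]

end aux

/-- For a prime power `q ≡ 3 (mod 4)`, the matrix `P` (with `P_{∞,b} = 1`,
`P_{a,∞} = 1`, `P_{a,a} = −1`, and `P_{a,b} = χ(b−a)` for distinct `a, b ∈ GF(q)`)
is a Hadamard matrix of order `q+1`. -/
theorem stmt_17 (q : ℕ) (h4 : q % 4 = 3)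
    (F : Type) [Field F] [Fintype F] [DecidableEq F] (hF : Fintype.card F = q) :
    (∀ i j, Pmat F i j = 1 ∨ Pmat F i j = -1) ∧
    Pmat F * (Pmat F)ᵀ = ((q + 1 : ℕ) : ℤ) • (1 : Matrix (Option F) (Option F) ℤ) := by
  have hF2 : ringChar F ≠ 2 := by
    intro h
    have := FiniteField.even_card_of_char_two (F := F) h
    rw [hF] at this
    omega
  have hneg : quadraticChar F (-1 : F) = -1 := by
    rw [quadraticChar_neg_one_iff_not_isSquare, FiniteField.isSquare_neg_one_iff, hF]
    omega
  have hflip : ∀ a b : F, (quadraticChar F (a - b) : ℤ) = - quadraticChar F (b - a) := by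
    intro a b
    have : a - b = (-1) * (b - a) := by ring
    rw [this, _root_.map_mul, hneg]
    push_cast
    ring
  constructor
  · intro i j
    match i, j with
    | none, _ => left; rfl
    | some a, none => left; rfl
    | some a, some b =>
      by_cases h : a = b
      · right; simp [Pmat, h]
      · have hba : b - a ≠ 0 := sub_ne_zero.mpr (Ne.symm h)
        rcases quadraticChar_dichotomy (F := F) hba with hc | hc
        · left; simp [Pmat, h]; exact_mod_cast hc
        · right; simp [Pmat, h]; exact_mod_cast hc
  · ext i j
    rw [Matrix.mul_apply]
    simp only [Matrix.transpose_apply, Matrix.smul_apply, Matrix.one_apply, smul_eq_mul]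
    rw [Fintype.sum_option]
    match i, j with
    | none, none =>
      simp [Pmat, Finset.card_univ, hF]
      push_cast
      ring
    | none, some b =>
      have : ∀ a : F, Pmat F none (some a) * Pmat F (some b) (some a)
          = (quadraticChar F (a - b) : ℤ) + (if a = b then -1 else 0) := by
        intro a
        by_cases h : a = b <;> simp [Pmat, h, Ne.symm, eq_comm]
      simp only [this]
      rw [Finset.sum_add_distrib, paley_shift_sum hF2 b]
      simp [Pmat]
    | some a, none =>
      have : ∀ b : F, Pmat F (some a) (some b) * Pmat F none (some b)
          = (quadraticChar F (b - a) : ℤ) + (if a = b then -1 else 0) := by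
        intro b
        by_cases h : a = b <;> simp [Pmat, h]
      simp only [this]
      rw [Finset.sum_add_distrib, paley_shift_sum hF2 a]
      simp [Pmat]
    | some a, some b =>
      by_cases hab : a = b
      · subst hab
        have : ∀ c : F, Pmat F (some a) (some c) * Pmat F (some a) (some c)
            = if a = c then 1 else 1 := by
          intro c
          by_cases h : a = c
          · simp [Pmat, h]
          · have hca : c - a ≠ 0 := sub_ne_zero.mpr (Ne.symm h)
            have := quadraticChar_sq_one (F := F) hca
            simp only [Pmat, h, if_false, if_neg h]
            have : (quadraticChar F (c - a) : ℤ) * quadraticChar F (c - a) = 1 := by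
              exact_mod_cast (by rw [← sq]; exact this :
                quadraticChar F (c - a) * quadraticChar F (c - a) = 1)
            rw [this]
        simp only [this, ite_self]
        simp [Pmat, Finset.card_univ, hF]
        push_cast
        ring
      · have key : ∀ c : F, Pmat F (some a) (some c) * Pmat F (some b) (some c)
            = (quadraticChar F (c - a) : ℤ) * quadraticChar F (c - b)
              + ((if c = a then (quadraticChar F (b - a) : ℤ) else 0)
                + (if c = b then -(quadraticChar F (b - a) : ℤ) else 0)) := by
          intro c
          by_cases hca : c = a
          · subst hca
            have hcb : ¬ (b = c) := fun h => hab h.symm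
            simp only [Pmat, if_pos rfl, if_neg hcb, sub_self, quadraticChar_zero,
              if_neg (fun h : c = b => hcb h.symm)]
            push_cast
            rw [hflip c b]
            ring
          · by_cases hcb : c = b
            · subst hcb
              have : ¬ (a = c) := fun h => hab h
              simp only [Pmat, if_neg this, if_pos rfl, if_neg hca, sub_self,
                quadraticChar_zero]
              push_cast
              ring
            · simp only [Pmat, if_neg (fun h : a = c => hca h.symm),
                if_neg (fun h : b = c => hcb h.symm), if_neg hca, if_neg hcb]
              ring
        simp only [key]
        rw [Finset.sum_add_distrib, Finset.sum_add_distrib]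
        have hs1 : ∑ c : F, (if c = a then (quadraticChar F (b - a) : ℤ) else 0)
            = quadraticChar F (b - a) := by simp
        have hs2 : ∑ c : F, (if c = b then -(quadraticChar F (b - a) : ℤ) else 0)
            = -quadraticChar F (b - a) := by simp
        have hcorr : ∑ c : F, (quadraticChar F (c - a) : ℤ) * quadraticChar F (c - b)
            = -1 := by
          have hd : a - b ≠ 0 := sub_ne_zero.mpr hab
          have := paley_corr (F := F) hF2 hd
          rw [← this]
          apply Fintype.sum_equiv (Equiv.subRight a)
          intro c
          simp only [Equiv.subRight_apply]
          have h : c - a + (a - b) = c - b := by ring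
          rw [h]
        rw [hs1, hs2, hcorr]
        simp [Pmat, hab]
end
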